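/- Let k be a circle with center O and radius R and ω a circle with center I and radius r in the Euclidean plane ℝ², with ω strictly inside k (dist(O,I) + r < R), O ≠ I, and dist(O,I)² = (R − r)² − 4r². Then there exists a fixed line ℓ in ℝ² with the following property: for every line t tangent to ω, every t-pair (ω₁, ω₂), and every second common external tangent u ≠ t of the three circles ω, ω₁, ω₂, if t and u intersect, then their intersection point lies on ℓ. -/

import Mathlib

open RealInnerProductSpace

noncomputable section

/-- The Euclidean plane. -/
abbrev Pt := EuclideanSpace ℝ (Fin 2)

section Helpers

lemma inner_coords (x y : Pt) : ⟪x, y⟫ = x 0 * y 0 + x 1 * y 1 := by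
  simp [PiLp.inner_apply, Fin.sum_univ_two, RCLike.inner_apply]; ring

lemma pt_ext {x y : Pt} (h0 : x 0 = y 0) (h1 : x 1 = y 1) : x = y := by
  ext i; fin_cases i <;> assumption

lemma pt_comp_ne {x : Pt} (hx : x ≠ 0) : x 0 ≠ 0 ∨ x 1 ≠ 0 := by
  by_contra h
  push_neg at h
  exact hx (pt_ext (by simpa using h.1) (by simpa using h.2))

lemma parallel_of_orth {D a b : Pt} (hD : D ≠ 0) (ha : ⟪a, D⟫ = 0) (hb : ⟪b, D⟫ = 0)
    (ha0 : a ≠ 0) : ∃ μ : ℝ, b = μ • a := by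
  rw [inner_coords] at ha hb
  have hdet : a 0 * b 1 - a 1 * b 0 = 0 := by
    rcases pt_comp_ne hD with h | h
    · have h0 : (a 0 * b 1 - a 1 * b 0) * D 0 = 0 := by linear_combination b 1 * ha - a 1 * hb
      exact (mul_eq_zero.mp h0).resolve_right h
    · have h1 : (a 0 * b 1 - a 1 * b 0) * D 1 = 0 := by linear_combination a 0 * hb - b 0 * ha
      exact (mul_eq_zero.mp h1).resolve_right h
  rcases pt_comp_ne ha0 with h | h
  · refine ⟨b 0 / a 0, pt_ext ?_ ?_⟩ <;> simp [PiLp.smul_apply] <;> field_simp <;> linarith [hdet]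
  · refine ⟨b 1 / a 1, pt_ext ?_ ?_⟩ <;> simp [PiLp.smul_apply] <;> field_simp <;> linarith [hdet]

lemma signed_dist_of_tangent {L : Set Pt} {P v n X₀ Q : Pt} {ρ : ℝ}
    (hv : v ≠ 0) (hL : L = {X | ∃ s : ℝ, X = P + s • v}) (hn : ‖n‖ = 1)
    (hX₀ : X₀ ∈ L) (hperp : ∀ X ∈ L, ∀ Y ∈ L, ⟪X - Y, n⟫ = 0)
    (htan : Metric.infDist Q L = ρ) (hpos : 0 < ⟪Q - X₀, n⟫) :
    ⟪Q - X₀, n⟫ = ρ := by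
  have hPL : P ∈ L := by rw [hL]; exact ⟨0, by simp⟩
  have hPvL : P + v ∈ L := by rw [hL]; exact ⟨1, by simp⟩
  have hvn : ⟪v, n⟫ = 0 := by
    have := hperp (P + v) hPvL P hPL
    simpa using this
  have hn0 : n ≠ 0 := by intro h; rw [h] at hn; simp at hn
  set c : ℝ := ⟪Q - X₀, n⟫ with hc
  have hlow : c ≤ Metric.infDist Q L := by
    rw [Metric.infDist_eq_iInf]
    have : Nonempty L := ⟨⟨X₀, hX₀⟩⟩
    refine le_ciInf fun z => ?_
    have hz : ⟪(z : Pt) - X₀, n⟫ = 0 := hperp z z.2 X₀ hX₀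
    have hQz : ⟪Q - (z : Pt), n⟫ = c := by
      simp only [inner_sub_left, hc] at hz ⊢
      linarith
    calc c = ⟪Q - (z : Pt), n⟫ := hQz.symm
      _ ≤ |⟪Q - (z : Pt), n⟫| := le_abs_self _
      _ ≤ ‖Q - (z : Pt)‖ * ‖n‖ := abs_real_inner_le_norm _ _
      _ = dist Q z := by rw [hn, mul_one, dist_eq_norm]
  have hup : Metric.infDist Q L ≤ c := by
    have hZmem : Q - c • n ∈ L := by
      have horth : ⟪Q - c • n - P, n⟫ = 0 := by
        have hXP : ⟪X₀ - P, n⟫ = 0 := hperp X₀ hX₀ P hPL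
        have hnn : ⟪n, n⟫ = (1 : ℝ) := by
          rw [real_inner_self_eq_norm_sq, hn]; norm_num
        simp only [inner_sub_left, real_inner_smul_left, hc] at hXP hpos ⊢
        nlinarith [hXP, hnn]
      obtain ⟨μ, hμ⟩ := parallel_of_orth hn0 hvn horth hv
      rw [hL]; exact ⟨μ, by rw [← hμ]; abel⟩
    calc Metric.infDist Q L ≤ dist Q (Q - c • n) := Metric.infDist_le_dist_of_mem hZmem
      _ = ‖c • n‖ := by rw [dist_eq_norm]; congr 1; abel
      _ = c := by rw [norm_smul, hn, mul_one, Real.norm_eq_abs, abs_of_pos hpos]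
  linarith [htan ▸ hlow, htan ▸ hup]

lemma line_through_pt {L : Set Pt} {P v X : Pt}
    (hL : L = {Y | ∃ s : ℝ, Y = P + s • v}) (hX : X ∈ L) :
    L = {Y | ∃ s : ℝ, Y = X + s • v} := by
  rw [hL] at hX ⊢
  obtain ⟨s₀, hs₀⟩ := hX
  ext Z
  constructor
  · rintro ⟨s, rfl⟩; exact ⟨s - s₀, by rw [hs₀]; module⟩
  · rintro ⟨s, rfl⟩; exact ⟨s₀ + s, by rw [hs₀]; module⟩

lemma line_eq_of_common {t u : Set Pt} {n : Pt} (hn : n ≠ 0)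
    (ht : ∃ P v : Pt, v ≠ 0 ∧ t = {X | ∃ s : ℝ, X = P + s • v})
    (hu : ∃ P v : Pt, v ≠ 0 ∧ u = {X | ∃ s : ℝ, X = P + s • v})
    (hpt : ∀ X ∈ t, ∀ Y ∈ t, ⟪X - Y, n⟫ = 0) (hpu : ∀ X ∈ u, ∀ Y ∈ u, ⟪X - Y, n⟫ = 0)
    {X : Pt} (hXt : X ∈ t) (hXu : X ∈ u) : t = u := by
  obtain ⟨P, v, hv, hLt⟩ := ht
  obtain ⟨P', w, hw, hLu⟩ := hu
  have hvn : ⟪v, n⟫ = 0 := by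
    have h1 : P + v ∈ t := by rw [hLt]; exact ⟨1, by simp⟩
    have h2 : P ∈ t := by rw [hLt]; exact ⟨0, by simp⟩
    simpa using hpt (P + v) h1 P h2
  have hwn : ⟪w, n⟫ = 0 := by
    have h1 : P' + w ∈ u := by rw [hLu]; exact ⟨1, by simp⟩
    have h2 : P' ∈ u := by rw [hLu]; exact ⟨0, by simp⟩
    simpa using hpu (P' + w) h1 P' h2
  obtain ⟨μ, hμ⟩ := parallel_of_orth hn hvn hwn hv
  have hμ0 : μ ≠ 0 := by rintro rfl; simp at hμ; exact hw hμ
  rw [line_through_pt hLt hXt, line_through_pt hLu hXu]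
  ext Z
  constructor
  · rintro ⟨s, rfl⟩
    exact ⟨s / μ, by rw [hμ, smul_smul, div_mul_cancel₀ _ hμ0]⟩
  · rintro ⟨s, rfl⟩
    exact ⟨s * μ, by rw [hμ, smul_smul]⟩

lemma radical_key {μ a b W R r : ℝ} (hr : 0 < r)
    (e1 : (μ - 1) ^ 2 * a = (μ * r + r) ^ 2)
    (e2 : μ ^ 2 * a - 2 * (μ * b) + W = (R - μ * r) ^ 2)
    (e3 : a - 2 * b + W = (R - r) ^ 2 - 4 * r ^ 2) :
    W - R ^ 2 = a - r ^ 2 := by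
  have hμ1 : μ - 1 ≠ 0 := by
    intro h
    have hμeq : μ = 1 := by linarith
    subst hμeq
    nlinarith [e1, hr]
  have key : r ^ 3 * (μ - 1) ^ 2 * (b - (a + R * r + r ^ 2)) = 0 := by
    linear_combination (r ^ 3 * (μ - 1) / 2) * e1 - (r ^ 3 * (μ - 1) / 2) * e2 +
      (r ^ 3 * (μ - 1) / 2) * e3
  have hfac : r ^ 3 * (μ - 1) ^ 2 ≠ 0 :=
    mul_ne_zero (pow_ne_zero 3 hr.ne') (pow_ne_zero 2 hμ1)
  have h0 := (mul_eq_zero.mp key).resolve_left hfac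
  have hb : b = a + R * r + r ^ 2 := by linarith [sub_eq_zero.mp h0]
  linarith [e3, hb]

end Helpers

/-- `L` is a line in the plane. -/
def IsLine (L : Set Pt) : Prop :=
  ∃ P v : Pt, v ≠ 0 ∧ L = {X | ∃ t : ℝ, X = P + t • v}

/-- The line `L` is tangent to the circle with center `P` and radius `ρ`:
the distance from `P` to `L` equals `ρ`. -/
def TangentTo (L : Set Pt) (P : Pt) (ρ : ℝ) : Prop := Metric.infDist P L = ρ

/-- All points of `S` lie strictly on the same side of the line `L`: there is a unit
normal `u` of `L` and a point `X₀ ∈ L` such that all signed distances `⟪X - X₀, u⟫`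
for `X ∈ S` are strictly positive (choosing `-u` covers the other sign). -/
def StrictSameSide (L : Set Pt) (S : Set Pt) : Prop :=
  ∃ u X₀ : Pt, ‖u‖ = 1 ∧ X₀ ∈ L ∧ (∀ X ∈ L, ∀ Y ∈ L, ⟪X - Y, u⟫ = 0) ∧
    ∀ P ∈ S, 0 < ⟪P - X₀, u⟫

/-- `L` is a common external tangent of the three circles `c₁, c₂, c₃`
(each given as a pair (center, radius)). -/
def IsCommonExternalTangent (L : Set Pt) (c₁ c₂ c₃ : Pt × ℝ) : Prop :=
  IsLine L ∧ TangentTo L c₁.1 c₁.2 ∧ TangentTo L c₂.1 c₂.2 ∧ TangentTo L c₃.1 c₃.2 ∧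
    StrictSameSide L {c₁.1, c₂.1, c₃.1}

/-- Given the outer circle `(O, R)`, the inner circle `(I, r)` and a line `t` tangent to the
inner circle, `(c₁, c₂)` is a `t`-pair: two distinct circles, each externally tangent to
`(I, r)`, internally tangent to `(O, R)`, tangent to `t`, with center strictly on the same
side of `t` as `I`. -/
def TPair (O : Pt) (R : ℝ) (I : Pt) (r : ℝ) (t : Set Pt) (c₁ c₂ : Pt × ℝ) : Prop :=
  c₁ ≠ c₂ ∧ 0 < c₁.2 ∧ 0 < c₂.2 ∧
  dist c₁.1 I = c₁.2 + r ∧ dist c₁.1 O = R - c₁.2 ∧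
  dist c₂.1 I = c₂.2 + r ∧ dist c₂.1 O = R - c₂.2 ∧
  TangentTo t c₁.1 c₁.2 ∧ TangentTo t c₂.1 c₂.2 ∧
  StrictSameSide t {I, c₁.1, c₂.1}

/-- **Theorem 2.** If `ω` lies strictly inside `k`, `O ≠ I` and
`dist O I ^ 2 = (R - r) ^ 2 - 4 r ^ 2`, then there is a fixed line `ℓ` such that for every
tangent line `t` of `ω`, every `t`-pair `(ω₁, ω₂)` and every second common external tangent
`u ≠ t` of `ω, ω₁, ω₂`, the intersection point of `t` and `u` (if any) lies on `ℓ`. -/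
theorem intersection_of_tangents_on_fixed_line
    (O I : Pt) (R r : ℝ) (hr : 0 < r) (hR : 0 < R)
    (hinside : dist O I + r < R) (hOI : O ≠ I)
    (heuler : dist O I ^ 2 = (R - r) ^ 2 - 4 * r ^ 2) :
    ∃ ℓ : Set Pt, IsLine ℓ ∧
      ∀ t : Set Pt, IsLine t → TangentTo t I r →
        ∀ c₁ c₂ : Pt × ℝ, TPair O R I r t c₁ c₂ →
          ∀ u : Set Pt, u ≠ t → IsCommonExternalTangent u (I, r) c₁ c₂ →
            ∀ X : Pt, X ∈ t → X ∈ u → X ∈ ℓ := by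
  classical
  have hIO : I - O ≠ 0 := sub_ne_zero.mpr (Ne.symm hOI)
  set C : ℝ := ‖I‖ ^ 2 - ‖O‖ ^ 2 + R ^ 2 - r ^ 2 with hC
  set N : ℝ := ‖I - O‖ ^ 2 with hN
  have hN0 : N ≠ 0 := by
    have : ‖I - O‖ ≠ 0 := norm_ne_zero_iff.mpr hIO
    positivity
  -- the radical axis of k and ω
  refine ⟨{Y : Pt | 2 * ⟪Y, I - O⟫ = C}, ?_, ?_⟩
  · -- it is a line, with direction the rotation of `I - O` by 90°
    set v : Pt := (WithLp.equiv 2 (Fin 2 → ℝ)).symm ![-((I - O) 1), (I - O) 0] with hv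
    have hv0 : v 0 = -((I - O) 1) := rfl
    have hv1 : v 1 = (I - O) 0 := rfl
    have hvne : v ≠ 0 := by
      intro h
      rcases pt_comp_ne hIO with h' | h'
      · refine h' ?_
        have h1 : v 1 = 0 := by rw [h]; rfl
        rw [hv1] at h1
        exact h1
      · refine h' ?_
        have h0 : v 0 = 0 := by rw [h]; rfl
        rw [hv0] at h0
        linarith
    have hvIO : ⟪v, I - O⟫ = 0 := by
      rw [inner_coords, hv0, hv1]; ring
    set P₀ : Pt := (C / (2 * N)) • (I - O) with hP₀
    have hP₀inner : ⟪P₀, I - O⟫ = C / 2 := by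
      rw [hP₀, real_inner_smul_left, real_inner_self_eq_norm_sq, ← hN]
      field_simp
    refine ⟨P₀, v, hvne, ?_⟩
    ext Y
    simp only [Set.mem_setOf_eq]
    constructor
    · intro hY
      have horth : ⟪Y - P₀, I - O⟫ = 0 := by
        rw [inner_sub_left, hP₀inner]; linarith
      obtain ⟨μ, hμ⟩ := parallel_of_orth hIO hvIO horth hvne
      exact ⟨μ, by rw [← hμ]; abel⟩
    · rintro ⟨s, rfl⟩
      rw [inner_add_left, hP₀inner, real_inner_smul_left, hvIO]
      ring
  · -- the main statement
    rintro t ht htI c₁ c₂ ⟨hne, hρ1, hρ2, hd1I, hd1O, hd2I, hd2O, htc1, htc2, hsideT⟩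
      u hut ⟨hulineU, hutI, hutc1, hutc2, hsideU⟩ X hXt hXu
    obtain ⟨P, vt, hvt, hLt⟩ := ht
    obtain ⟨n, X₀, hn1, hX₀t, hperpt, hposT⟩ := hsideT
    obtain ⟨P', vu, hvu, hLu⟩ := hulineU
    obtain ⟨m, Y₀, hm1, hY₀u, hperpu, hposU⟩ := hsideU
    have hn0 : n ≠ 0 := by intro h; rw [h] at hn1; simp at hn1
    -- signed distances along t
    have hIt : ⟪I - X₀, n⟫ = r :=
      signed_dist_of_tangent hvt hLt hn1 hX₀t hperpt htI (hposT I (by simp))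
    have hJt : ⟪c₁.1 - X₀, n⟫ = c₁.2 :=
      signed_dist_of_tangent hvt hLt hn1 hX₀t hperpt htc1 (hposT c₁.1 (by simp))
    -- signed distances along u
    have hIu : ⟪I - Y₀, m⟫ = r :=
      signed_dist_of_tangent hvu hLu hm1 hY₀u hperpu hutI (hposU I (by simp))
    have hJu : ⟪c₁.1 - Y₀, m⟫ = c₁.2 :=
      signed_dist_of_tangent hvu hLu hm1 hY₀u hperpu hutc1 (hposU c₁.1 (by simp))
    -- transfer base point to X
    have hXX₀ : ⟪X - X₀, n⟫ = 0 := hperpt X hXt X₀ hX₀t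
    have hXY₀ : ⟪X - Y₀, m⟫ = 0 := hperpu X hXu Y₀ hY₀u
    have hIXn : ⟪I - X, n⟫ = r := by
      simp only [inner_sub_left] at hIt hXX₀ ⊢; linarith
    have hJXn : ⟪c₁.1 - X, n⟫ = c₁.2 := by
      simp only [inner_sub_left] at hJt hXX₀ ⊢; linarith
    have hIXm : ⟪I - X, m⟫ = r := by
      simp only [inner_sub_left] at hIu hXY₀ ⊢; linarith
    have hJXm : ⟪c₁.1 - X, m⟫ = c₁.2 := by
      simp only [inner_sub_left] at hJu hXY₀ ⊢; linarith
    -- the two tangent lines have distinct normals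
    have hnm : n ≠ m := by
      rintro rfl
      exact hut (line_eq_of_common hn0 ⟨P', vu, hvu, hLu⟩ ⟨P, vt, hvt, hLt⟩
        hperpu hperpt hXu hXt)
    have hD : n - m ≠ 0 := sub_ne_zero.mpr hnm
    have hID : ⟪I - X, n - m⟫ = 0 := by rw [inner_sub_right, hIXn, hIXm]; ring
    have hJD : ⟪c₁.1 - X, n - m⟫ = 0 := by rw [inner_sub_right, hJXn, hJXm]; ring
    have hIX0 : I - X ≠ 0 := by
      intro h
      rw [h, inner_zero_left] at hIXn
      linarith
    -- collinearity of X, I and the center of ω₁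
    obtain ⟨μ, hμ⟩ := parallel_of_orth hD hID hJD hIX0
    have hμr : μ * r = c₁.2 := by
      rw [hμ, real_inner_smul_left, hIXn] at hJXn
      exact hJXn
    -- the three metric relations
    have e1 : (μ - 1) ^ 2 * ‖I - X‖ ^ 2 = (μ * r + r) ^ 2 := by
      have hJI : (μ - 1) • (I - X) = c₁.1 - I := by
        have h' : c₁.1 - I = (c₁.1 - X) - (I - X) := by abel
        rw [h', hμ]; module
      have h2 : ‖c₁.1 - I‖ ^ 2 = (c₁.2 + r) ^ 2 := by rw [← dist_eq_norm, hd1I]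
      rw [← hJI, norm_smul, Real.norm_eq_abs, mul_pow, sq_abs] at h2
      rw [h2, hμr]
    have e2 : μ ^ 2 * ‖I - X‖ ^ 2 - 2 * (μ * ⟪I - X, O - X⟫) + ‖O - X‖ ^ 2
        = (R - μ * r) ^ 2 := by
      have hJO : μ • (I - X) - (O - X) = c₁.1 - O := by
        have h' : c₁.1 - O = (c₁.1 - X) - (O - X) := by abel
        rw [h', hμ]
      have h2 : ‖c₁.1 - O‖ ^ 2 = (R - c₁.2) ^ 2 := by rw [← dist_eq_norm, hd1O]
      have h3 := norm_sub_sq_real (μ • (I - X)) (O - X)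
      rw [hJO, h2, norm_smul, real_inner_smul_left, Real.norm_eq_abs, mul_pow, sq_abs] at h3
      rw [hμr]
      linarith [h3]
    have e3 : ‖I - X‖ ^ 2 - 2 * ⟪I - X, O - X⟫ + ‖O - X‖ ^ 2
        = (R - r) ^ 2 - 4 * r ^ 2 := by
      have h3 := norm_sub_sq_real (I - X) (O - X)
      have hIOX : (I - X) - (O - X) = I - O := by abel
      rw [hIOX] at h3
      have h4 : ‖I - O‖ ^ 2 = (R - r) ^ 2 - 4 * r ^ 2 := by
        rw [← dist_eq_norm, dist_comm, heuler]
      linarith [h3, h4]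
    have goal' : ‖O - X‖ ^ 2 - R ^ 2 = ‖I - X‖ ^ 2 - r ^ 2 :=
      radical_key hr e1 e2 e3
    -- translate into the radical-axis equation
    have hA : ‖I - X‖ ^ 2 = ‖I‖ ^ 2 - 2 * ⟪X, I⟫ + ‖X‖ ^ 2 := by
      rw [norm_sub_sq_real, real_inner_comm]
    have hWex : ‖O - X‖ ^ 2 = ‖O‖ ^ 2 - 2 * ⟪X, O⟫ + ‖X‖ ^ 2 := by
      rw [norm_sub_sq_real, real_inner_comm]
    show 2 * ⟪X, I - O⟫ = C
    rw [inner_sub_right, hC]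
    rw [hA, hWex] at goal'
    linarith
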